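/- For every natural number i, ∑_{j=0}^{i} r_{ij} = Cᵢ, the i-th Catalan number. (Since r_{ij} = 0 for j > i, this says the i-th row sum of D(𝔽^S)⁻¹D is Cᵢ.) -/

import Mathlib

open PowerSeries Finset

/-- The generating function of the Catalan numbers. -/
noncomputable def catalanGF : PowerSeries ℝ :=
  PowerSeries.mk fun n => (catalan n : ℝ)

/-- `r i j` is the coefficient of `x^i` in `(xC(x))^j`, i.e. the `(i,j)` entry of
`D(𝔽^S)⁻¹D`. -/
noncomputable def rEntry (i j : ℕ) : ℝ :=
  PowerSeries.coeff (R := ℝ) i ((PowerSeries.X * catalanGF) ^ j)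

lemma catalanGF_eq : catalanGF = 1 + PowerSeries.X * catalanGF ^ 2 := by
  ext n
  cases n with
  | zero => simp [catalanGF]
  | succ n =>
    rw [map_add, PowerSeries.coeff_one, PowerSeries.coeff_succ_X_mul, if_neg (Nat.succ_ne_zero n),
      zero_add, sq, PowerSeries.coeff_mul]
    simp only [catalanGF, PowerSeries.coeff_mk]
    rw [catalan_succ' n]
    push_cast
    rfl

lemma catalanGF_inv : catalanGF * (1 - PowerSeries.X * catalanGF) = 1 := by
  have h := catalanGF_eq
  linear_combination h

/-- The `i`-th row sum of `D(𝔽^S)⁻¹D` is the `i`-th Catalan number. -/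
theorem stmt_7 (i : ℕ) :
    ∑ j ∈ Finset.range (i + 1), rEntry i j = (catalan i : ℝ) := by
  set u : PowerSeries ℝ := PowerSeries.X * catalanGF with hu
  have hgeom : (1 - u) * (∑ j ∈ Finset.range (i + 1), u ^ j) = 1 - u ^ (i + 1) := by
    have := geom_sum_mul u (i + 1)
    linear_combination -this
  have hS : (∑ j ∈ Finset.range (i + 1), u ^ j)
      = catalanGF * (1 - u ^ (i + 1)) := by
    calc (∑ j ∈ Finset.range (i + 1), u ^ j)
        = (catalanGF * (1 - u)) * (∑ j ∈ Finset.range (i + 1), u ^ j) := by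
          rw [catalanGF_inv, one_mul]
      _ = catalanGF * ((1 - u) * (∑ j ∈ Finset.range (i + 1), u ^ j)) := by ring
      _ = catalanGF * (1 - u ^ (i + 1)) := by rw [hgeom]
  have : ∑ j ∈ Finset.range (i + 1), rEntry i j
      = PowerSeries.coeff (R := ℝ) i (∑ j ∈ Finset.range (i + 1), u ^ j) := by
    rw [map_sum]; rfl
  rw [this, hS, mul_sub, mul_one, map_sub]
  have hz : PowerSeries.coeff (R := ℝ) i (catalanGF * u ^ (i + 1)) = 0 := by
    have hdvd : (PowerSeries.X : PowerSeries ℝ) ^ (i + 1) ∣ catalanGF * u ^ (i + 1) := by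
      rw [hu, mul_pow]
      exact ⟨catalanGF ^ (i + 1) * catalanGF, by ring⟩
    exact PowerSeries.X_pow_dvd_iff.mp hdvd i (Nat.lt_succ_self i)
  rw [hz, sub_zero]
  simp [catalanGF]
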